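/- arXiv:1505.07763 — 2 statements merged into one kernel-verified Lean document; each statement's English description precedes it below -/
import Mathlib

section
/- Let q > 1 and C : ℝⁿ → [0,∞) be a q-homogeneous, even, strictly convex function with C(x) = 0 iff x = 0. Let K = {x : C(x) ≤ 1} and let C* be the Legendre transform of C. Then the polar body K° = {x ∈ ℝⁿ : ⟨x,y⟩ ≤ 1 ∀ y ∈ K} satisfies K° = {x ∈ ℝⁿ : C*(x) ≤ ℓ_q}, where ℓ_q = q^{-p/q} p^{-1} and 1/p + 1/q = 1. -/
open MeasureTheory Real
open scoped RealInnerProductSpace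

noncomputable section

/-- The Legendre transform. -/
def legendre {n : ℕ} (C : EuclideanSpace ℝ (Fin n) → ℝ) (x : EuclideanSpace ℝ (Fin n)) : ℝ :=
  ⨆ y : EuclideanSpace ℝ (Fin n), (⟪x, y⟫ - C y)

/-- A consequence of Young's inequality: a linear term minus a super-linear power term is
bounded above by an explicit constant. -/
private lemma aux_young {p q : ℝ} (hpq : p.HolderConjugate q) (a m r : ℝ)
    (ha : 0 ≤ a) (hm : 0 < m) (hr : 0 ≤ r) :
    a * r - m * r ^ q ≤ (a * ((q * m) ^ (1 / q))⁻¹) ^ p / p := by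
  have hq0 : 0 < q := hpq.symm.pos
  have hqm : 0 < q * m := mul_pos hq0 hm
  set c : ℝ := (q * m) ^ (1 / q) with hc
  have hc0 : 0 < c := rpow_pos_of_pos hqm _
  have hcq : c ^ q = q * m := by
    rw [hc, ← Real.rpow_mul hqm.le, one_div, inv_mul_cancel₀ hq0.ne', rpow_one]
  have key := Real.young_inequality_of_nonneg (a := a * c⁻¹) (b := c * r)
    (mul_nonneg ha (inv_nonneg.2 hc0.le)) (mul_nonneg hc0.le hr) hpq
  have h1 : a * c⁻¹ * (c * r) = a * r := by field_simp
  have h2 : (c * r) ^ q = q * m * r ^ q := by rw [Real.mul_rpow hc0.le hr, hcq]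
  rw [h1, h2] at key
  have h3 : q * m * r ^ q / q = m * r ^ q := by field_simp
  rw [h3] at key
  linarith

/-- For a `q`-homogeneous, even, strictly convex `C` vanishing only at `0`, the polar body of
`K = {C ≤ 1}` is `{x : C*(x) ≤ ℓ_q}` where `ℓ_q = q^(-p/q) p⁻¹`. -/
theorem polar_sublevel_eq_legendre_sublevel (n : ℕ) (p q : ℝ) (hq : 1 < q)
    (hpq : 1 / p + 1 / q = 1) (C : EuclideanSpace ℝ (Fin n) → ℝ)
    (hC0 : ∀ x, 0 ≤ C x) (heven : ∀ x, C (-x) = C x)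
    (hconv : StrictConvexOn ℝ Set.univ C)
    (hhom : ∀ l : ℝ, 0 ≤ l → ∀ x, C (l • x) = l ^ q * C x)
    (hdef : ∀ x, C x = 0 ↔ x = 0) :
    {x : EuclideanSpace ℝ (Fin n) | ∀ y ∈ {z : EuclideanSpace ℝ (Fin n) | C z ≤ 1}, ⟪x, y⟫ ≤ 1} =
      {x : EuclideanSpace ℝ (Fin n) | legendre C x ≤ q ^ (-(p / q)) * p⁻¹} := by
  have hq0 : 0 < q := lt_trans one_pos hq
  have h1q : 0 < 1 / q := by positivity
  have h1q' : 1 / q < 1 := by rw [div_lt_one hq0]; exact hq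
  have h1p : 0 < 1 / p := by linarith
  have hp0 : 0 < p := one_div_pos.mp h1p
  have hp : 1 < p := (div_lt_one hp0).mp (by linarith)
  have hconj : p.HolderConjugate q := Real.holderConjugate_iff.mpr ⟨hp, by rw [← one_div p, ← one_div q]; exact hpq⟩
  have hpqe : p + q = p * q := by
    have h := hpq
    field_simp at h
    linarith
  have hpq2 : p / q = p - 1 := by
    rw [div_eq_iff hq0.ne', sub_mul, one_mul, ← hpqe]
    ring
  have hℓeq : (1 * ((q * 1) ^ (1 / q))⁻¹) ^ p / p = q ^ (-(p / q)) * p⁻¹ := by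
    rw [mul_one, one_mul, ← Real.rpow_neg hq0.le, ← Real.rpow_mul hq0.le,
      show -(1 / q) * p = -(p / q) by ring, div_eq_mul_inv]
  have hC0' : C 0 = 0 := (hdef 0).mpr rfl
  have keyineq : ∀ t : ℝ, 0 ≤ t → t ^ (1 / q) - t ≤ q ^ (-(p / q)) * p⁻¹ := by
    intro t ht
    have h := aux_young hconj 1 1 (t ^ (1 / q)) zero_le_one one_pos (rpow_nonneg ht _)
    have hrq : (t ^ (1 / q)) ^ q = t := by
      rw [← Real.rpow_mul ht, one_div, inv_mul_cancel₀ hq0.ne', rpow_one]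
    rw [hrq, hℓeq, one_mul, one_mul] at h
    linarith
  have hcont : Continuous C := by
    have h1 : ContinuousOn C Set.univ := hconv.convexOn.continuousOn isOpen_univ
    exact continuousOn_univ.mp h1
  -- Boundedness of the family defining the Legendre transform
  have bdd : ∀ x : EuclideanSpace ℝ (Fin n),
      BddAbove (Set.range fun z : EuclideanSpace ℝ (Fin n) => ⟪x, z⟫ - C z) := by
    intro x
    by_cases hS : (Metric.sphere (0 : EuclideanSpace ℝ (Fin n)) 1).Nonempty
    · obtain ⟨u₀, hu₀S, hu₀min⟩ := (isCompact_sphere (0 : EuclideanSpace ℝ (Fin n)) 1)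
        |>.exists_isMinOn hS hcont.continuousOn
      set m := C u₀ with hm
      have hmpos : 0 < m := by
        rcases (hC0 u₀).lt_or_eq with h | h
        · exact h
        · exfalso
          have h0 : u₀ = 0 := (hdef u₀).mp h.symm
          rw [h0] at hu₀S
          simp at hu₀S
      set B := (‖x‖ * ((q * m) ^ (1 / q))⁻¹) ^ p / p with hB
      have hB0 : 0 ≤ B :=
        div_nonneg (rpow_nonneg (mul_nonneg (norm_nonneg x)
          (inv_nonneg.2 (rpow_nonneg (mul_nonneg hq0.le hmpos.le) _))) _) hp0.le
      refine ⟨B, ?_⟩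
      rintro _ ⟨z, rfl⟩
      by_cases hz : z = 0
      · simpa [hz, hC0'] using hB0
      · have hz0 : 0 < ‖z‖ := norm_pos_iff.2 hz
        have huS : ‖z‖⁻¹ • z ∈ Metric.sphere (0 : EuclideanSpace ℝ (Fin n)) 1 := by
          simp [norm_smul, abs_of_pos (inv_pos.2 hz0), inv_mul_cancel₀ hz0.ne']
        have hCz : m * ‖z‖ ^ q ≤ C z := by
          have h1 : C z = ‖z‖ ^ q * C (‖z‖⁻¹ • z) := by
            conv_lhs => rw [← smul_inv_smul₀ hz0.ne' z]
            exact hhom ‖z‖ hz0.le _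
          have h2 : m ≤ C (‖z‖⁻¹ • z) := isMinOn_iff.mp hu₀min _ huS
          have h3 : (0:ℝ) ≤ ‖z‖ ^ q := rpow_nonneg hz0.le _
          nlinarith
        have hxz : ⟪x, z⟫ ≤ ‖x‖ * ‖z‖ := real_inner_le_norm x z
        have hay := aux_young hconj ‖x‖ m ‖z‖ (norm_nonneg x) hmpos hz0.le
        simp only
        linarith
    · refine ⟨0, ?_⟩
      rintro _ ⟨z, rfl⟩
      have hz : z = 0 := by
        by_contra hz
        have hz0 : 0 < ‖z‖ := norm_pos_iff.2 hz
        exact hS ⟨‖z‖⁻¹ • z, by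
          simp [norm_smul, abs_of_pos (inv_pos.2 hz0), inv_mul_cancel₀ hz0.ne']⟩
      simp [hz, hC0']
  ext x
  simp only [Set.mem_setOf_eq]
  constructor
  · intro hx
    rw [legendre]
    refine ciSup_le fun y => ?_
    by_cases hy : C y = 0
    · have hy0 : y = 0 := (hdef y).mp hy
      have hℓ0 : 0 ≤ q ^ (-(p / q)) * p⁻¹ :=
        mul_nonneg (rpow_nonneg hq0.le _) (inv_nonneg.2 hp0.le)
      simpa [hy0, hC0'] using hℓ0
    · have hc : 0 < C y := (hC0 y).lt_of_ne (Ne.symm hy)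
      have hl : (0:ℝ) ≤ (C y) ^ (-(1 / q)) := rpow_nonneg hc.le _
      have hu : C ((C y) ^ (-(1 / q)) • y) ≤ 1 := by
        rw [hhom _ hl, ← Real.rpow_mul hc.le,
          show -(1 / q) * q = -1 by field_simp, rpow_neg_one, inv_mul_cancel₀ hc.ne']
      have h2 := hx _ hu
      rw [real_inner_smul_right] at h2
      have h3 : ⟪x, y⟫ ≤ (C y) ^ (1 / q) := by
        have hcp : 0 < (C y) ^ (1 / q) := rpow_pos_of_pos hc _
        have h4 : (C y) ^ (1 / q) * ((C y) ^ (-(1 / q)) * ⟪x, y⟫) ≤ (C y) ^ (1 / q) * 1 :=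
          mul_le_mul_of_nonneg_left h2 hcp.le
        rw [mul_one, ← mul_assoc, ← Real.rpow_add hc, add_neg_cancel, rpow_zero, one_mul] at h4
        exact h4
      have h5 := keyineq (C y) hc.le
      linarith
  · intro hx y hy
    rw [legendre] at hx
    have hle : ∀ z, ⟪x, z⟫ - C z ≤ q ^ (-(p / q)) * p⁻¹ :=
      fun z => (le_ciSup (bdd x) z).trans hx
    by_contra hcon
    push_neg at hcon
    set a := ⟪x, y⟫ with hadef
    have ha1 : 1 < a := hcon
    have ha0 : 0 < a := lt_trans one_pos ha1
    have haq : 0 < a / q := div_pos ha0 hq0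
    set t := (a / q) ^ (p - 1) with ht
    have ht0 : 0 < t := rpow_pos_of_pos haq _
    have h1 := hle (t • y)
    rw [real_inner_smul_right, hhom t ht0.le] at h1
    have htqnn : (0:ℝ) ≤ t ^ q := rpow_nonneg ht0.le _
    have h2 : t * a - t ^ q ≤ q ^ (-(p / q)) * p⁻¹ := by
      have h6 : t ^ q * C y ≤ t ^ q * 1 := mul_le_mul_of_nonneg_left hy htqnn
      linarith
    have htq : t ^ q = (a / q) ^ p := by
      rw [ht, ← Real.rpow_mul haq.le, show (p - 1) * q = p by rw [sub_mul, one_mul, ← hpqe]; ring]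
    have hfac : (a / q) ^ p = t * (a / q) := by
      rw [ht, ← Real.rpow_add_one haq.ne', show p - 1 + 1 = p by ring]
    have hta : t * a = a ^ p * (q ^ (p - 1))⁻¹ := by
      have haa : a ^ (p - 1) * a = a ^ p := by
        rw [← Real.rpow_add_one ha0.ne', show p - 1 + 1 = p by ring]
      calc t * a = a ^ (p - 1) / q ^ (p - 1) * a := by
            rw [ht, Real.div_rpow ha0.le hq0.le]
        _ = a ^ (p - 1) * a * (q ^ (p - 1))⁻¹ := by ring
        _ = a ^ p * (q ^ (p - 1))⁻¹ := by rw [haa]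
    have hval : t * a - t ^ q = a ^ p * (q ^ (p - 1))⁻¹ * p⁻¹ := by
      rw [htq, hfac]
      have h1q2 : 1 - 1 / q = 1 / p := by linarith
      have : t * a - t * (a / q) = t * a * (1 - 1 / q) := by ring
      rw [this, h1q2, hta, one_div]
    have hap : 1 < a ^ p := (Real.one_lt_rpow_iff_of_pos ha0).mpr (Or.inl ⟨ha1, hp0⟩)
    have hqp : 0 < (q ^ (p - 1) : ℝ)⁻¹ := inv_pos.2 (rpow_pos_of_pos hq0 _)
    have hℓrw : q ^ (-(p / q)) * p⁻¹ = (q ^ (p - 1))⁻¹ * p⁻¹ := by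
      rw [hpq2, Real.rpow_neg hq0.le]
    have hfin : q ^ (-(p / q)) * p⁻¹ < t * a - t ^ q := by
      rw [hval, hℓrw]
      have hip : 0 < p⁻¹ := inv_pos.2 hp0
      have h7 := mul_lt_mul_of_pos_right hap (mul_pos hqp hip)
      linarith [h7]
    linarith
end
end

section
/- Let n ≥ 1, β > 0, and f(x) = c - b|x - a| with a ∈ ℝⁿ, b > 0, c ∈ ℝ chosen so that ∫_{ℝⁿ} e^{β f(x)} dx = 1. Then e^{-βc} = n! ω_n / (β^n b^n) and Ent(e^{β f}) = ∫ e^{βf} βf dx = βc - n = n log((β k_n / e) b), where k_n = (n! ω_n)^{-1/n}. -/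
open MeasureTheory Real

noncomputable section

/-- `ω_n`, the volume of the unit ball of `ℝⁿ`. -/
def omegaN (n : ℕ) : ℝ := (volume (Metric.ball (0 : EuclideanSpace ℝ (Fin n)) 1)).toReal

/-- `k_n = (n! ω_n)^{-1/n}`. -/
def kn (n : ℕ) : ℝ := ((n.factorial : ℝ) * omegaN n) ^ (-(1 / (n : ℝ)))

lemma omegaN_pos (n : ℕ) : 0 < omegaN n :=
  ENNReal.toReal_pos (Metric.measure_ball_pos volume 0 one_pos).ne' measure_ball_lt_top.ne

lemma cone_integral (n k : ℕ) (hn : 1 ≤ n) {s : ℝ} (hs : 0 < s) :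
    (∫ x : EuclideanSpace ℝ (Fin n), ‖x‖ ^ k * Real.exp (-(s * ‖x‖)))
      = n * omegaN n * ((n + k - 1).factorial / s ^ (n + k)) := by
  haveI : Nonempty (Fin n) := ⟨⟨0, hn⟩⟩
  rw [integral_fun_norm_addHaar (volume : Measure (EuclideanSpace ℝ (Fin n)))
    (fun y => y ^ k * Real.exp (-(s * y)))]
  rw [finrank_euclideanSpace_fin]
  have h1 : (∫ y in Set.Ioi (0:ℝ), y ^ (n - 1) • (y ^ k * Real.exp (-(s * y))))
      = (1 / s) ^ ((n : ℝ) + k) * Real.Gamma ((n : ℝ) + k) := by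
    rw [← integral_rpow_mul_exp_neg_mul_Ioi (by positivity : (0:ℝ) < (n:ℝ) + k) hs]
    refine setIntegral_congr_fun measurableSet_Ioi fun y hy => ?_
    have hy : (0:ℝ) < y := hy
    rw [smul_eq_mul, ← mul_assoc, ← pow_add, ← Real.rpow_natCast y (n - 1 + k)]
    congr 1
    push_cast [Nat.cast_sub hn]
    ring
  rw [h1]
  have h2 : ((n:ℝ) + k) = ((n + k - 1 : ℕ) : ℝ) + 1 := by
    have : 1 ≤ n + k := le_trans hn (Nat.le_add_right n k)
    push_cast [Nat.cast_sub this]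
    ring
  rw [h2, Real.Gamma_nat_eq_factorial, ← h2,
    show ((n:ℝ) + k) = ((n + k : ℕ) : ℝ) by push_cast; ring, Real.rpow_natCast]
  unfold omegaN
  rw [nsmul_eq_mul, smul_eq_mul, div_pow, one_pow]
  rw [measureReal_def]
  ring

/-- For the cone function `f(x) = c - b|x - a|` normalized by `∫ e^{βf} = 1`:
`e^{-βc} = n! ω_n / (β^n b^n)` and `Ent(e^{βf}) = βc - n = n log((β k_n / e) b)`. -/
theorem entropy_of_cone (n : ℕ) (hn : 1 ≤ n) (β b c : ℝ) (hβ : 0 < β) (hb : 0 < b)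
    (a : EuclideanSpace ℝ (Fin n))
    (hnorm : (∫ x : EuclideanSpace ℝ (Fin n), Real.exp (β * (c - b * ‖x - a‖))) = 1) :
    Real.exp (-(β * c)) = (n.factorial : ℝ) * omegaN n / (β ^ n * b ^ n) ∧
    (∫ x : EuclideanSpace ℝ (Fin n),
        Real.exp (β * (c - b * ‖x - a‖)) * (β * (c - b * ‖x - a‖))) = β * c - n ∧
    β * c - n = n * Real.log (β * kn n / Real.exp 1 * b) := by
  have hE : True := trivial
  set s : ℝ := β * b with hs_def
  have hs : 0 < s := mul_pos hβ hb
  have hexp : ∀ x : EuclideanSpace ℝ (Fin n), Real.exp (β * (c - b * ‖x - a‖))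
      = Real.exp (β * c) * Real.exp (-(s * ‖x - a‖)) := by
    intro x; rw [← Real.exp_add]; congr 1; rw [hs_def]; ring
  -- value of the basic integral
  have hI0 : (∫ x : EuclideanSpace ℝ (Fin n), Real.exp (-(s * ‖x‖)))
      = (n.factorial : ℝ) * omegaN n / s ^ n := by
    have := cone_integral n 0 hn hs
    simp only [pow_zero, one_mul, Nat.add_zero] at this
    rw [this]
    have hf : (n : ℝ) * ((n - 1).factorial : ℝ) = (n.factorial : ℝ) := by
      exact_mod_cast Nat.mul_factorial_pred (by omega)
    rw [← hf]; ring
  have hI1 : (∫ x : EuclideanSpace ℝ (Fin n), ‖x‖ * Real.exp (-(s * ‖x‖)))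
      = (n : ℝ) * ((n.factorial : ℝ) * omegaN n / s ^ n) / s := by
    have := cone_integral n 1 hn hs
    simp only [pow_one] at this
    rw [this, Nat.add_sub_cancel]
    rw [pow_succ]
    have hf : (n : ℝ) * ((n - 1).factorial : ℝ) = (n.factorial : ℝ) := by
      exact_mod_cast Nat.mul_factorial_pred (by omega)
    field_simp
  -- normalization rewritten
  have hnorm' : Real.exp (β * c) * ((n.factorial : ℝ) * omegaN n / s ^ n) = 1 := by
    rw [← hI0, ← integral_const_mul,
      ← integral_sub_right_eq_self (fun x : EuclideanSpace ℝ (Fin n) => Real.exp (β * c) * Real.exp (-(s * ‖x‖))) a,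
      ← hnorm]
    exact integral_congr_ae (Filter.Eventually.of_forall fun x => (hexp x).symm)
  -- first conjunct
  have h1 : Real.exp (-(β * c)) = (n.factorial : ℝ) * omegaN n / s ^ n := by
    calc Real.exp (-(β * c))
        = Real.exp (-(β * c)) * (Real.exp (β * c) * ((n.factorial : ℝ) * omegaN n / s ^ n)) := by
          rw [hnorm', mul_one]
      _ = (n.factorial : ℝ) * omegaN n / s ^ n := by
          rw [← mul_assoc, ← Real.exp_add, neg_add_cancel, Real.exp_zero, one_mul]
  have hsn : s ^ n = β ^ n * b ^ n := by rw [hs_def, mul_pow]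
  refine ⟨by rw [h1, hsn], ?_, ?_⟩
  · -- second conjunct
    have hInt : Integrable (fun x : EuclideanSpace ℝ (Fin n) =>
        Real.exp (β * (c - b * ‖x - a‖))) volume := by
      by_contra h
      rw [integral_undef h] at hnorm
      exact one_ne_zero hnorm.symm
    have hInt0 : Integrable (fun x : EuclideanSpace ℝ (Fin n) =>
        Real.exp (-(s * ‖x - a‖))) volume := by
      refine (hInt.const_mul (Real.exp (-(β * c)))).congr
        (Filter.Eventually.of_forall fun x => ?_)
      show Real.exp (-(β * c)) * Real.exp (β * (c - b * ‖x - a‖)) = Real.exp (-(s * ‖x - a‖))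
      rw [hexp x, ← mul_assoc, ← Real.exp_add, neg_add_cancel, Real.exp_zero, one_mul]
    have hInt0u : Integrable (fun x : EuclideanSpace ℝ (Fin n) =>
        Real.exp (-(s * ‖x‖))) volume := by
      have := hInt0.comp_sub_right (-a)
      simpa [sub_neg_eq_add, add_sub_cancel_right] using this
    have hInth : Integrable (fun x : EuclideanSpace ℝ (Fin n) =>
        Real.exp (-(s / 2 * ‖x‖))) volume := by
      have h2 := (integrable_comp_smul_iff volume
        (fun x : EuclideanSpace ℝ (Fin n) => Real.exp (-(s * ‖x‖)))
        (show ((2:ℝ)⁻¹) ≠ 0 by norm_num)).mpr hInt0u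
      refine h2.congr (Filter.Eventually.of_forall fun x => ?_)
      show Real.exp (-(s * ‖(2:ℝ)⁻¹ • x‖)) = Real.exp (-(s / 2 * ‖x‖))
      rw [norm_smul, Real.norm_eq_abs, abs_of_pos (by norm_num : (0:ℝ) < 2⁻¹)]
      congr 1
      ring
    have hInt1 : Integrable (fun x : EuclideanSpace ℝ (Fin n) =>
        ‖x‖ * Real.exp (-(s * ‖x‖))) volume := by
      refine (hInth.const_mul (2 / s)).mono' ?_ (Filter.Eventually.of_forall fun x => ?_)
      · exact (continuous_norm.mul
          (Real.continuous_exp.comp ((continuous_const.mul continuous_norm).neg))).aestronglyMeasurable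
      · have ht : (0:ℝ) ≤ ‖x‖ := norm_nonneg x
        set t : ℝ := ‖x‖ with htdef
        have hb1 : s / 2 * t ≤ Real.exp (s / 2 * t) := by
          have := Real.add_one_le_exp (s / 2 * t)
          linarith
        have hb2 : t ≤ 2 / s * Real.exp (s / 2 * t) := by
          rw [div_mul_eq_mul_div, le_div_iff₀ hs]
          calc t * s = 2 * (s / 2 * t) := by ring
            _ ≤ 2 * Real.exp (s / 2 * t) := by linarith
        have hsplit : Real.exp (-(s * t)) = Real.exp (-(s / 2 * t)) * Real.exp (-(s / 2 * t)) := by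
          rw [← Real.exp_add]; ring_nf
        have hexp_pos : (0:ℝ) < Real.exp (-(s / 2 * t)) := Real.exp_pos _
        rw [Real.norm_eq_abs, abs_of_nonneg (by positivity)]
        have hstep : t * Real.exp (-(s / 2 * t)) ≤ 2 / s := by
          rw [Real.exp_neg, mul_inv_le_iff₀ (Real.exp_pos _)]
          calc t ≤ 2 / s * Real.exp (s / 2 * t) := hb2
            _ = 2 / s * Real.exp (s / 2 * t) := rfl
        calc t * Real.exp (-(s * t))
            = t * Real.exp (-(s / 2 * t)) * Real.exp (-(s / 2 * t)) := by rw [hsplit]; ring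
          _ ≤ 2 / s * Real.exp (-(s / 2 * t)) :=
              mul_le_mul_of_nonneg_right hstep hexp_pos.le
    have hInt1a : Integrable (fun x : EuclideanSpace ℝ (Fin n) =>
        ‖x - a‖ * Real.exp (-(s * ‖x - a‖))) volume := hInt1.comp_sub_right a
    have key : ∀ x : EuclideanSpace ℝ (Fin n),
        Real.exp (β * (c - b * ‖x - a‖)) * (β * (c - b * ‖x - a‖))
          = (β * c) * Real.exp (β * (c - b * ‖x - a‖))
            - (s * Real.exp (β * c)) * (‖x - a‖ * Real.exp (-(s * ‖x - a‖))) := by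
      intro x
      rw [hexp x, hs_def]
      ring
    rw [integral_congr_ae (Filter.Eventually.of_forall key),
      integral_sub (hInt.const_mul _) (hInt1a.const_mul _),
      integral_const_mul, integral_const_mul, hnorm, mul_one,
      integral_sub_right_eq_self (fun x : EuclideanSpace ℝ (Fin n) =>
        ‖x‖ * Real.exp (-(s * ‖x‖))) a, hI1]
    have hlast : s * Real.exp (β * c) *
        ((n : ℝ) * ((n.factorial : ℝ) * omegaN n / s ^ n) / s) = n := by
      rw [show s * Real.exp (β * c) * ((n : ℝ) * ((n.factorial : ℝ) * omegaN n / s ^ n) / s)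
          = (n : ℝ) * (Real.exp (β * c) * ((n.factorial : ℝ) * omegaN n / s ^ n)) by
        field_simp]
      rw [hnorm', mul_one]
    rw [hlast]
  · -- third conjunct
    have hω : (0:ℝ) < (n.factorial : ℝ) * omegaN n :=
      mul_pos (by exact_mod_cast n.factorial_pos) (omegaN_pos n)
    have hkn : 0 < kn n := Real.rpow_pos_of_pos hω _
    have hβc : β * c = n * Real.log β + n * Real.log b
        - Real.log ((n.factorial : ℝ) * omegaN n) := by
      have h2 := congrArg Real.log h1
      rw [Real.log_exp, hsn,
        Real.log_div hω.ne' (by positivity),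
        Real.log_mul (Nat.cast_ne_zero.mpr n.factorial_pos.ne') (omegaN_pos n).ne',
        Real.log_mul (by positivity) (by positivity),
        Real.log_pow, Real.log_pow] at h2
      push_cast at h2
      have h3 := Real.log_mul (Nat.cast_ne_zero.mpr n.factorial_pos.ne' :
        ((n.factorial : ℝ)) ≠ 0) (omegaN_pos n).ne'
      linarith
    have hR : Real.log (β * kn n / Real.exp 1 * b)
        = Real.log β + Real.log (kn n) - 1 + Real.log b := by
      rw [Real.log_mul (by positivity) hb.ne',
        Real.log_div (by positivity) (Real.exp_ne_zero 1),
        Real.log_mul hβ.ne' hkn.ne', Real.log_exp]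
    have hlogkn : (n : ℝ) * Real.log (kn n)
        = - Real.log ((n.factorial : ℝ) * omegaN n) := by
      rw [kn, Real.log_rpow hω]
      have hn0 : (n : ℝ) ≠ 0 := by positivity
      field_simp
    rw [hR, hβc]
    have hn0 : (n : ℝ) ≠ 0 := by positivity
    nlinarith [hlogkn]
end
end
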